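/- Let P = P₁ ∪ … ∪ P_k and Q = Q₁ ∪ … ∪ Q_l be nonempty subsets of ℚ^n, where each P_i and each Q_j is a linear set. Suppose that both P and Q satisfy the line condition. If the affine hulls of P and Q coincide, aff(P) = aff(Q) = A, then there exist indices i and j such that aff(P_i ∩ Q_j) = A. -/

import Mathlib

/-- A linear set in ℚ^n: the solution set of a finite conjunction of linear
inequalities `c₁x₁+…+cₙxₙ ≤ b` or `c₁x₁+…+cₙxₙ < b` with rational coefficients. -/
def IsLinearSetQ (n : ℕ) (S : Set (Fin n → ℚ)) : Prop :=
  ∃ (m : ℕ) (c : Fin m → Fin n → ℚ) (b : Fin m → ℚ) (strict : Fin m → Bool),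
    S = {x | ∀ i, if strict i then (∑ j, c i j * x j) < b i else (∑ j, c i j * x j) ≤ b i}

/-- The affine hull of S ⊆ ℚ^n: the set of all affine combinations
Σ xᵢ • pᵢ with pᵢ ∈ S, xᵢ ∈ ℚ, Σ xᵢ = 1. -/
def affHull {n : ℕ} (S : Set (Fin n → ℚ)) : Set (Fin n → ℚ) :=
  {x | ∃ (k : ℕ) (w : Fin k → ℚ) (p : Fin k → (Fin n → ℚ)),
    (∀ i, p i ∈ S) ∧ (∑ i, w i) = 1 ∧ x = ∑ i, w i • p i}

/-- S satisfies the line condition if for all distinct a, b ∈ ℚ^n, whenever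
{y ∈ ℚ | (1−y)•a + y•b ∈ S} contains at least two elements, it is unbounded
above and unbounded below. -/
def LineCondition {n : ℕ} (S : Set (Fin n → ℚ)) : Prop :=
  ∀ a b : Fin n → ℚ, a ≠ b →
    (∃ y₁ y₂ : ℚ, y₁ ≠ y₂ ∧ (1 - y₁) • a + y₁ • b ∈ S ∧ (1 - y₂) • a + y₂ • b ∈ S) →
    (∀ K : ℚ, ∃ y : ℚ, K < y ∧ (1 - y) • a + y • b ∈ S) ∧
    (∀ K : ℚ, ∃ y : ℚ, y < K ∧ (1 - y) • a + y • b ∈ S)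

open Finset

variable {n : ℕ}

abbrev E (n : ℕ) := Fin n → ℚ


/-- evaluation of row functional -/
lemma row_eval {m : ℕ} (c : Fin m → Fin n → ℚ) (i : Fin m) (y v : E n) (t : ℚ) :
    (∑ j, c i j * (y + t • v) j) = (∑ j, c i j * y j) + t * (∑ j, c i j * v j) := by
  rw [Finset.mul_sum, ← Finset.sum_add_distrib]
  congr 1; ext j
  simp [Pi.add_apply, Pi.smul_apply, smul_eq_mul]; ring

/-- Key absorption: if a linear set contains points `y + t•v` for unboundedly large `t`,
then from any point `x ∈ S`, one can move any nonneg amount in direction `v`. -/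
lemma linear_absorb {S : Set (E n)} (hS : IsLinearSetQ n S) {y v : E n}
    (h : ∀ K : ℚ, ∃ t, K < t ∧ y + t • v ∈ S) {x : E n} (hx : x ∈ S) {ε : ℚ} (hε : 0 ≤ ε) :
    x + ε • v ∈ S := by
  obtain ⟨m, c, b, strict, rfl⟩ := hS
  intro i
  have hv : (∑ j, c i j * v j) ≤ 0 := by
    by_contra hpos
    push_neg at hpos
    obtain ⟨t, ht, hmem⟩ := h (max 0 ((b i - (∑ j, c i j * y j)) / (∑ j, c i j * v j)))
    have h2 := hmem i
    have h3 : (b i - (∑ j, c i j * y j)) / (∑ j, c i j * v j) < t := lt_of_le_of_lt (le_max_right _ _) ht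
    have h4 : b i - (∑ j, c i j * y j) < t * (∑ j, c i j * v j) := by
      rw [div_lt_iff₀ hpos] at h3; linarith
    rw [row_eval] at h2
    rcases Bool.dichotomy (strict i) with hb | hb <;> simp [hb] at h2 <;> linarith
  have hx1 := hx i
  have key : (∑ j, c i j * (x + ε • v) j) ≤ (∑ j, c i j * x j) := by
    rw [row_eval]
    nlinarith
  rcases Bool.dichotomy (strict i) with hb | hb <;>
    simp only [Set.mem_setOf_eq, hb, Bool.false_eq_true, if_true, if_false] at hx1 ⊢ <;> linarith

/-- tail version -/
lemma linear_tail {S : Set (E n)} (hS : IsLinearSetQ n S) {y v : E n}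
    (h : ∀ K : ℚ, ∃ t, K < t ∧ y + t • v ∈ S) :
    ∃ t₀ : ℚ, ∀ t ≥ t₀, y + t • v ∈ S := by
  obtain ⟨t₁, _, h₁⟩ := h 0
  refine ⟨t₁, fun t ht => ?_⟩
  have := linear_absorb hS h h₁ (ε := t - t₁) (by linarith)
  have heq : y + t₁ • v + (t - t₁) • v = y + t • v := by
    rw [add_assoc, ← add_smul]; ring_nf
  rwa [heq] at this

/-- pigeonhole for unbounded predicates over a fintype -/
lemma pigeon {ι : Type*} [Fintype ι] (p : ι → ℚ → Prop)
    (h : ∀ K : ℚ, ∃ t, K < t ∧ ∃ i, p i t) : ∃ i, ∀ K : ℚ, ∃ t, K < t ∧ p i t := by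
  by_contra hc
  push_neg at hc
  choose f hf using hc
  obtain ⟨t₀, _, i₀, _⟩ := h 0
  have hne : (Finset.univ : Finset ι).Nonempty := ⟨i₀, mem_univ i₀⟩
  obtain ⟨t, ht, i, hi⟩ := h (Finset.univ.sup' hne f)
  exact hf i t (lt_of_le_of_lt (Finset.le_sup' f (mem_univ i)) ht) hi

lemma two_vals {p : ℚ → Prop} (h : ∀ K : ℚ, ∃ t, K < t ∧ p t) :
    ∃ t₁ t₂, t₁ < t₂ ∧ p t₁ ∧ p t₂ := by
  obtain ⟨t₁, _, h₁⟩ := h 0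
  obtain ⟨t₂, ht, h₂⟩ := h t₁
  exact ⟨t₁, t₂, ht, h₁, h₂⟩



/-- recession direction witnessed by an unbounded ray -/
def RecDir (S : Set (E n)) (v : E n) : Prop :=
  ∃ y : E n, ∀ K : ℚ, ∃ t, K < t ∧ y + t • v ∈ S

lemma recDir_zero {S : Set (E n)} {x : E n} (hx : x ∈ S) : RecDir S 0 :=
  ⟨x, fun K => ⟨K + 1, by linarith, by simpa using hx⟩⟩

lemma recDir_mem {S : Set (E n)} (hS : IsLinearSetQ n S) {x v : E n} (hx : x ∈ S)
    (hv : RecDir S v) {ε : ℚ} (hε : 0 ≤ ε) : x + ε • v ∈ S := by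
  obtain ⟨y, hy⟩ := hv
  exact linear_absorb hS hy hx hε

lemma recDir_add {S : Set (E n)} (hS : IsLinearSetQ n S) {u v : E n}
    (hu : RecDir S u) (hv : RecDir S v) : RecDir S (u + v) := by
  obtain ⟨y, hy⟩ := hu
  refine ⟨y, fun K => ?_⟩
  obtain ⟨t, ht, hmem⟩ := hy (max K 0)
  refine ⟨t, lt_of_le_of_lt (le_max_left _ _) ht, ?_⟩
  have h0t : (0:ℚ) ≤ t := le_of_lt (lt_of_le_of_lt (le_max_right _ _) ht)
  have := recDir_mem hS hmem hv h0t
  rwa [add_assoc, ← smul_add] at this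

lemma recDir_smul {S : Set (E n)} {v : E n} (hv : RecDir S v) {c : ℚ} (hc : 0 < c) :
    RecDir S (c • v) := by
  obtain ⟨y, hy⟩ := hv
  refine ⟨y, fun K => ?_⟩
  obtain ⟨t, ht, hmem⟩ := hy (K * c)
  refine ⟨t / c, by rwa [lt_div_iff₀ hc], ?_⟩
  rwa [smul_smul, div_mul_cancel₀ _ (ne_of_gt hc)]

/-- sum of members of the recession cone -/
lemma recDir_sum {S : Set (E n)} (hS : IsLinearSetQ n S) (hne : S.Nonempty)
    {ι : Type*} (s : Finset ι) (f : ι → E n) (hf : ∀ i ∈ s, RecDir S (f i)) :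
    RecDir S (∑ i ∈ s, f i) := by
  classical
  induction s using Finset.induction_on with
  | empty => simpa using recDir_zero hne.choose_spec
  | @insert a s ha ih =>
      rw [Finset.sum_insert ha]
      exact recDir_add hS (hf a (Finset.mem_insert_self a s))
        (ih fun i hi => hf i (Finset.mem_insert_of_mem hi))

/-- Difference set of a recession cone is a submodule; decomposition lemma. -/
lemma span_recDir_diff {S : Set (E n)} (hS : IsLinearSetQ n S) (hne : S.Nonempty)
    {z : E n} (hz : z ∈ Submodule.span ℚ {v | RecDir S v}) :
    ∃ a b : E n, RecDir S a ∧ RecDir S b ∧ z = a - b := by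
  classical
  have h0 : RecDir S 0 := recDir_zero hne.choose_spec
  let D : Submodule ℚ (E n) :=
    { carrier := {u | ∃ a b : E n, RecDir S a ∧ RecDir S b ∧ u = a - b}
      zero_mem' := ⟨0, 0, h0, h0, by simp⟩
      add_mem' := by
        rintro u v ⟨a, b, ha, hb, rfl⟩ ⟨a', b', ha', hb', rfl⟩
        exact ⟨a + a', b + b', recDir_add hS ha ha', recDir_add hS hb hb', by abel⟩
      smul_mem' := by
        rintro c u ⟨a, b, ha, hb, rfl⟩
        rcases lt_trichotomy c 0 with hc | hc | hc
        · refine ⟨(-c) • b, (-c) • a, recDir_smul hb (by linarith),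
            recDir_smul ha (by linarith), ?_⟩
          rw [smul_sub]; module
        · subst hc; exact ⟨0, 0, h0, h0, by simp⟩
        · exact ⟨c • a, c • b, recDir_smul ha hc, recDir_smul hb hc, by rw [smul_sub]⟩ }
  have hle : Submodule.span ℚ {v | RecDir S v} ≤ D := by
    rw [Submodule.span_le]
    intro v hv
    exact ⟨v, 0, hv, h0, by simp⟩
  exact hle hz


lemma affHull_eq_affineSpan (S : Set (E n)) :
    affHull S = (affineSpan ℚ S : Set (E n)) := by
  classical
  ext x
  constructor
  · rintro ⟨k, w, p, hp, hw, rfl⟩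
    have h1 : (∑ i, w i • p i) = Finset.univ.affineCombination ℚ p w :=
      (Finset.affineCombination_eq_linear_combination _ _ _ hw).symm
    rw [h1]
    have h2 := affineCombination_mem_affineSpan (k := ℚ) hw p
    exact affineSpan_mono ℚ (Set.range_subset_iff.2 hp) h2
  · intro hx
    have hx' : x ∈ affineSpan ℚ (Set.range (fun s : S => (s : E n))) := by
      rwa [Subtype.range_coe] 
    obtain ⟨s, w, hw, hx2⟩ := eq_affineCombination_of_mem_affineSpan hx'
    rw [Finset.affineCombination_eq_linear_combination _ _ _ hw] at hx2
    refine ⟨s.card, fun i => w (s.equivFin.symm i), fun i => ((s.equivFin.symm i : S) : E n),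
      fun i => (s.equivFin.symm i : S).2, ?_, ?_⟩
    · rw [← hw]
      rw [← Finset.sum_coe_sort s (fun a => w a)]
      exact Fintype.sum_equiv s.equivFin.symm _ _ (fun i => rfl)
    · rw [hx2, ← Finset.sum_coe_sort s (fun a => w a • (a : E n))]
      exact (Fintype.sum_equiv s.equivFin.symm _ _ (fun i => rfl)).symm


lemma line_pt (a b : E n) (t : ℚ) : (1 - t) • a + t • b = a + t • (b - a) := by
  module

lemma lineCond_up {U : Set (E n)} (hline : LineCondition U) {a b : E n} (hab : a ≠ b)
    (ha : a ∈ U) (hb : b ∈ U) : ∀ K : ℚ, ∃ t, K < t ∧ a + t • (b - a) ∈ U := by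
  have h := hline a b hab ⟨0, 1, by norm_num, by simpa using ha, by simpa using hb⟩
  intro K
  obtain ⟨y, hy, hmem⟩ := h.1 K
  exact ⟨y, hy, by rwa [line_pt] at hmem⟩

lemma lineCond_down {U : Set (E n)} (hline : LineCondition U) {a b : E n} (hab : a ≠ b)
    (ha : a ∈ U) (hb : b ∈ U) : ∀ K : ℚ, ∃ t, t < K ∧ a + t • (b - a) ∈ U := by
  have h := hline a b hab ⟨0, 1, by norm_num, by simpa using ha, by simpa using hb⟩
  intro K
  obtain ⟨y, hy, hmem⟩ := h.2 K
  exact ⟨y, hy, by rwa [line_pt] at hmem⟩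

lemma claimA {ι : Type} [Fintype ι] (S : ι → Set (E n)) (hline : LineCondition (⋃ i, S i))
    (hne : (⋃ i, S i).Nonempty) :
    ∃ i, (S i).Nonempty ∧
      vectorSpan ℚ (⋃ i, S i) ≤ Submodule.span ℚ {v | RecDir (S i) v} := by
  classical
  set U := ⋃ i, S i with hU
  set W : ι → Submodule ℚ (E n) := fun i => Submodule.span ℚ {v | RecDir (S i) v} with hW
  by_contra hcon
  push_neg at hcon
  have noGood : ∀ T : Finset ι, ∀ α ∈ U, ¬ (∀ r ∈ U, ∃ i ∈ T, (S i).Nonempty ∧ r - α ∈ W i) := by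
    intro T
    induction T using Finset.strongInduction with
    | _ T ih =>
      intro α hα hgood
      obtain ⟨i₀, hi₀T, hi₀ne, -⟩ := hgood α hα
      have hnotle := hcon i₀ hi₀ne
      have hex : ∃ p ∈ U, ∃ q ∈ U, p - q ∉ W i₀ := by
        by_contra hno
        push_neg at hno
        apply hnotle
        rw [vectorSpan_def, Submodule.span_le]
        intro z hz
        rw [Set.mem_vsub] at hz
        obtain ⟨p, hp, q, hq, rfl⟩ := hz
        exact hno p hp q hq
      obtain ⟨p, hp, q, hq, hpq⟩ := hex
      set v := p - q with hv
      have hv0 : v ≠ 0 := fun h => hpq (by rw [h]; exact (W i₀).zero_mem)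
      have hqp : q ≠ p := fun h => hv0 (by rw [hv, h, sub_self])
      have hup : ∀ K, ∃ t, K < t ∧ q + t • v ∈ U := lineCond_up hline hqp hq hp
      have star : ∀ r ∈ U, ∃ j ∈ T, (S j).Nonempty ∧ v ∈ W j ∧ r - q ∈ W j := by
        intro r hr
        have hsuit : ∀ K : ℚ, ∃ t : ℚ, K < t ∧ (q + t • v ∈ U ∧ q + t • v ≠ r) := by
          intro K
          obtain ⟨t₁, ht₁, hm₁⟩ := hup K
          obtain ⟨t₂, ht₂, hm₂⟩ := hup t₁
          by_cases h1 : q + t₁ • v = r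
          · refine ⟨t₂, lt_trans ht₁ ht₂, hm₂, fun h2 => ?_⟩
            have h3 : (t₁ - t₂) • v = 0 := by
              have := h1.trans h2.symm
              have h4 : t₁ • v = t₂ • v := by
                have := add_left_cancel this
                linear_combination (norm := module) this
              rw [sub_smul, h4, sub_self]
            rcases smul_eq_zero.1 h3 with h5 | h5
            · exact absurd (sub_eq_zero.1 h5) (ne_of_lt ht₂)
            · exact hv0 h5
          · exact ⟨t₁, ht₁, hm₁, h1⟩
        have inner : ∀ t : ℚ, (q + t • v ∈ U ∧ q + t • v ≠ r) →
            ∃ j, (j ∈ T ∧ (S j).Nonempty) ∧ ((q - r) + t • v ∈ W j ∧ r - α ∈ W j) := by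
          rintro t ⟨hxt, hxtr⟩
          have hrx : r ≠ q + t • v := fun h => hxtr h.symm
          have hupr := lineCond_up hline hrx hr hxt
          have hu2 : ∀ K : ℚ, ∃ s : ℚ, K < s ∧ ∃ j,
              (j ∈ T ∧ (S j).Nonempty) ∧ (r + s • ((q + t • v) - r)) - α ∈ W j := by
            intro K
            obtain ⟨s, hs, hmem⟩ := hupr K
            obtain ⟨j, hjT, hjne, hjW⟩ := hgood _ hmem
            exact ⟨s, hs, j, ⟨hjT, hjne⟩, hjW⟩
          obtain ⟨j, hj⟩ := pigeon (fun j s =>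
            (j ∈ T ∧ (S j).Nonempty) ∧ (r + s • ((q + t • v) - r)) - α ∈ W j) hu2
          obtain ⟨s₁, s₂, hs12, ⟨⟨hjT, hjne⟩, h1⟩, ⟨-, h2⟩⟩ := two_vals hj
          have hdir : ((q + t • v) - r) ∈ W j := by
            have h3 := (W j).sub_mem h2 h1
            have heq : (r + s₂ • ((q + t • v) - r)) - α - ((r + s₁ • ((q + t • v) - r)) - α)
                = (s₂ - s₁) • ((q + t • v) - r) := by
              rw [sub_smul]; abel
            rw [heq] at h3
            have h6 := (W j).smul_mem (s₂ - s₁)⁻¹ h3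
            rwa [smul_smul, inv_mul_cancel₀ (sub_ne_zero.2 (ne_of_gt hs12)), one_smul] at h6
          have hrα : r - α ∈ W j := by
            have h4 := (W j).sub_mem h1 ((W j).smul_mem s₁ hdir)
            have heq : (r + s₁ • ((q + t • v) - r)) - α - s₁ • ((q + t • v) - r) = r - α := by
              abel
            rwa [heq] at h4
          refine ⟨j, ⟨hjT, hjne⟩, ?_, hrα⟩
          have heq2 : (q - r) + t • v = (q + t • v) - r := by abel
          rw [heq2]; exact hdir
        have hu3 : ∀ K : ℚ, ∃ t : ℚ, K < t ∧ ∃ j,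
            (j ∈ T ∧ (S j).Nonempty) ∧ ((q - r) + t • v ∈ W j ∧ r - α ∈ W j) := by
          intro K
          obtain ⟨t, ht, hsu⟩ := hsuit K
          obtain ⟨j, h1, h2⟩ := inner t hsu
          exact ⟨t, ht, j, h1, h2⟩
        obtain ⟨j, hj⟩ := pigeon _ hu3
        obtain ⟨t₁, t₂, ht12, ⟨⟨hjT, hjne⟩, hA1, -⟩, ⟨-, hB1, -⟩⟩ := two_vals hj
        have hvW : v ∈ W j := by
          have h3 := (W j).sub_mem hB1 hA1
          have heq : ((q - r) + t₂ • v) - ((q - r) + t₁ • v) = (t₂ - t₁) • v := by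
            rw [sub_smul]; abel
          rw [heq] at h3
          have h6 := (W j).smul_mem (t₂ - t₁)⁻¹ h3
          rwa [smul_smul, inv_mul_cancel₀ (sub_ne_zero.2 (ne_of_gt ht12)), one_smul] at h6
        have hrq : r - q ∈ W j := by
          have h5 : q - r ∈ W j := by
            have h7 := (W j).sub_mem hA1 ((W j).smul_mem t₁ hvW)
            rwa [add_sub_cancel_right] at h7
          have h8 := (W j).neg_mem h5
          rwa [neg_sub] at h8
        exact ⟨j, hjT, hjne, hvW, hrq⟩
      set T' := T.filter (fun j => v ∈ W j) with hT'
      have hT'sub : T' ⊂ T := by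
        refine (Finset.ssubset_iff_of_subset (Finset.filter_subset _ _)).2 ⟨i₀, hi₀T, ?_⟩
        intro hmem
        exact hpq (Finset.mem_filter.1 hmem).2
      refine ih T' hT'sub q hq ?_
      intro r hr
      obtain ⟨j, hjT, hjne, hvj, hrq⟩ := star r hr
      exact ⟨j, Finset.mem_filter.2 ⟨hjT, hvj⟩, hjne, hrq⟩
  obtain ⟨a, ha⟩ := hne
  refine noGood Finset.univ a ha ?_
  intro r hr
  by_cases h : r = a
  · obtain ⟨i, hi⟩ := Set.mem_iUnion.1 ha
    exact ⟨i, Finset.mem_univ i, ⟨a, hi⟩, by rw [h, sub_self]; exact (W i).zero_mem⟩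
  · have har : a ≠ r := fun hh => h hh.symm
    have hup := lineCond_up hline har ha hr
    have hu : ∀ K : ℚ, ∃ t : ℚ, K < t ∧ ∃ i, a + t • (r - a) ∈ S i := by
      intro K
      obtain ⟨t, ht, hm⟩ := hup K
      exact ⟨t, ht, Set.mem_iUnion.1 hm⟩
    obtain ⟨i, hi⟩ := pigeon _ hu
    have hRec : RecDir (S i) (r - a) := ⟨a, hi⟩
    have hne' : (S i).Nonempty := by
      obtain ⟨t, -, hm⟩ := hi 0
      exact ⟨_, hm⟩
    exact ⟨i, Finset.mem_univ i, hne', Submodule.subset_span hRec⟩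

lemma piece_span {ι : Type} [Fintype ι] (S : ι → Set (E n)) (hS : ∀ i, IsLinearSetQ n (S i))
    (hline : LineCondition (⋃ i, S i)) (hne : (⋃ i, S i).Nonempty) :
    ∃ i, affineSpan ℚ (S i) = affineSpan ℚ (⋃ i, S i) := by
  obtain ⟨i, hine, hle⟩ := claimA S hline hne
  obtain ⟨x, hx⟩ := hine
  refine ⟨i, le_antisymm (affineSpan_mono ℚ (Set.subset_iUnion S i)) ?_⟩
  rw [affineSpan_le]
  intro s hs
  have hd : s - x ∈ vectorSpan ℚ (⋃ i, S i) :=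
    vsub_mem_vectorSpan ℚ hs (Set.mem_iUnion.2 ⟨i, hx⟩)
  have hd2 : s - x ∈ (affineSpan ℚ (S i)).direction := by
    rw [direction_affineSpan]
    have hsub : {v | RecDir (S i) v} ⊆ (vectorSpan ℚ (S i) : Set (E n)) := by
      intro v hv
      have h1 : x + (1:ℚ) • v ∈ S i := recDir_mem (hS i) hx hv zero_le_one
      have h2 := vsub_mem_vectorSpan ℚ h1 hx
      simpa using h2
    exact (Submodule.span_le.2 hsub) (hle hd)
  have h3 : (s - x) +ᵥ x ∈ affineSpan ℚ (S i) :=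
    AffineSubspace.vadd_mem_of_mem_direction hd2 (mem_affineSpan ℚ hx)
  simpa using h3

lemma isLinearSet_inter {S T : Set (E n)} (hS : IsLinearSetQ n S) (hT : IsLinearSetQ n T) :
    IsLinearSetQ n (S ∩ T) := by
  obtain ⟨m₁, c₁, b₁, s₁, rfl⟩ := hS
  obtain ⟨m₂, c₂, b₂, s₂, rfl⟩ := hT
  refine ⟨m₁ + m₂, Fin.append c₁ c₂, Fin.append b₁ b₂, Fin.append s₁ s₂, ?_⟩
  ext x
  simp only [Set.mem_inter_iff, Set.mem_setOf_eq]
  constructor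
  · rintro ⟨h1, h2⟩ i
    refine Fin.addCases (fun i => ?_) (fun i => ?_) i
    · simpa [Fin.append_left] using h1 i
    · simpa [Fin.append_right] using h2 i
  · intro h
    constructor
    · intro i
      have := h (Fin.castAdd m₂ i)
      simpa [Fin.append_left] using this
    · intro i
      have := h (Fin.natAdd m₁ i)
      simpa [Fin.append_right] using this

/-- two P-points and two Q-points on a common line give a common tail -/
lemma tails_both {k l : ℕ} (P : Fin k → Set (E n)) (Q : Fin l → Set (E n))
    (hP : ∀ i, IsLinearSetQ n (P i)) (hQ : ∀ j, IsLinearSetQ n (Q j))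
    (hPline : LineCondition (⋃ i, P i)) (hQline : LineCondition (⋃ j, Q j))
    {a v : E n} (hv : v ≠ 0) {τ₁ τ₂ σ₁ σ₂ : ℚ} (hτ : τ₁ < τ₂) (hσ : σ₁ < σ₂)
    (hp1 : a + τ₁ • v ∈ ⋃ i, P i) (hp2 : a + τ₂ • v ∈ ⋃ i, P i)
    (hq1 : a + σ₁ • v ∈ ⋃ j, Q j) (hq2 : a + σ₂ • v ∈ ⋃ j, Q j) :
    ∃ i j, ∃ t₀ : ℚ, ∀ t ≥ t₀, a + t • v ∈ P i ∧ a + t • v ∈ Q j := by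
  have key : ∀ (m : ℕ) (R : Fin m → Set (E n)), (∀ i, IsLinearSetQ n (R i)) →
      LineCondition (⋃ i, R i) → ∀ {ρ₁ ρ₂ : ℚ}, ρ₁ < ρ₂ →
      a + ρ₁ • v ∈ (⋃ i, R i) → a + ρ₂ • v ∈ (⋃ i, R i) →
      ∃ i, ∃ t₀ : ℚ, ∀ t ≥ t₀, a + t • v ∈ R i := by
    intro m R hR hRline ρ₁ ρ₂ hρ h1 h2
    have hne : a + ρ₁ • v ≠ a + ρ₂ • v := by
      intro h
      have h4 : (ρ₁ - ρ₂) • v = 0 := by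
        have h5 := add_left_cancel h
        rw [sub_smul, h5, sub_self]
      rcases smul_eq_zero.1 h4 with h5 | h5
      · exact absurd (sub_eq_zero.1 h5) (ne_of_lt hρ)
      · exact hv h5
    have hup := lineCond_up hRline hne h1 h2
    have hup' : ∀ K : ℚ, ∃ t : ℚ, K < t ∧ a + t • v ∈ (⋃ i, R i) := by
      intro K
      obtain ⟨s, hs, hmem⟩ := hup ((K - ρ₁) / (ρ₂ - ρ₁))
      have hd : (0:ℚ) < ρ₂ - ρ₁ := by linarith
      refine ⟨ρ₁ + s * (ρ₂ - ρ₁), ?_, ?_⟩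
      · rw [div_lt_iff₀ hd] at hs; linarith
      · have heq : a + ρ₁ • v + s • (a + ρ₂ • v - (a + ρ₁ • v)) = a + (ρ₁ + s * (ρ₂ - ρ₁)) • v := by
          rw [add_smul, mul_smul, smul_sub]
          rw [sub_smul]
          module
        rwa [heq] at hmem
    have hu2 : ∀ K : ℚ, ∃ t : ℚ, K < t ∧ ∃ i, a + t • v ∈ R i := by
      intro K
      obtain ⟨t, ht, hm⟩ := hup' K
      exact ⟨t, ht, Set.mem_iUnion.1 hm⟩
    obtain ⟨i, hi⟩ := pigeon _ hu2
    obtain ⟨t₀, ht₀⟩ := linear_tail (hR i) hi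
    exact ⟨i, t₀, ht₀⟩
  obtain ⟨i, t₁, h₁⟩ := key k P hP hPline hτ hp1 hp2
  obtain ⟨j, t₂, h₂⟩ := key l Q hQ hQline hσ hq1 hq2
  exact ⟨i, j, max t₁ t₂, fun t ht =>
    ⟨h₁ t (le_trans (le_max_left _ _) ht), h₂ t (le_trans (le_max_right _ _) ht)⟩⟩

lemma lineCond_inter {k l : ℕ} (P : Fin k → Set (E n)) (Q : Fin l → Set (E n))
    (hP : ∀ i, IsLinearSetQ n (P i)) (hQ : ∀ j, IsLinearSetQ n (Q j))
    (hPline : LineCondition (⋃ i, P i)) (hQline : LineCondition (⋃ j, Q j)) :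
    LineCondition ((⋃ i, P i) ∩ (⋃ j, Q j)) := by
  rintro a b hab ⟨y₁, y₂, hy, h1, h2⟩
  set v := b - a with hvdef
  have hv : v ≠ 0 := sub_ne_zero.2 (Ne.symm hab)
  rw [line_pt] at h1 h2
  rcases lt_or_gt_of_ne hy with hlt | hlt
  case _ =>
    constructor
    · obtain ⟨i, j, t₀, ht⟩ := tails_both P Q hP hQ hPline hQline hv hlt hlt
        h1.1 h2.1 h1.2 h2.2
      intro K
      refine ⟨max K t₀ + 1, by simp [lt_of_le_of_lt (le_max_left K t₀)], ?_⟩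
      rw [line_pt]
      have := ht (max K t₀ + 1) (by linarith [le_max_right K t₀])
      exact ⟨Set.mem_iUnion.2 ⟨i, this.1⟩, Set.mem_iUnion.2 ⟨j, this.2⟩⟩
    · have hneg : ∀ t : ℚ, a + t • v = a + (-t) • (-v) := by intro t; simp
      obtain ⟨i, j, t₀, ht⟩ := tails_both P Q hP hQ hPline hQline (neg_ne_zero.2 hv)
        (neg_lt_neg hlt : -y₂ < -y₁) (neg_lt_neg hlt)
        (by rw [← hneg]; exact h2.1) (by rw [← hneg]; exact h1.1)
        (by rw [← hneg]; exact h2.2) (by rw [← hneg]; exact h1.2)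
      intro K
      refine ⟨-(max (-K) t₀ + 1), ?_, ?_⟩
      · have : -K ≤ max (-K) t₀ := le_max_left _ _
        linarith
      · rw [line_pt]
        have heq := hneg (-(max (-K) t₀ + 1))
        rw [heq, neg_neg]
        have := ht (max (-K) t₀ + 1) (by linarith [le_max_right (-K) t₀])
        exact ⟨Set.mem_iUnion.2 ⟨i, this.1⟩, Set.mem_iUnion.2 ⟨j, this.2⟩⟩
  case _ =>
    constructor
    · obtain ⟨i, j, t₀, ht⟩ := tails_both P Q hP hQ hPline hQline hv hlt hlt
        h2.1 h1.1 h2.2 h1.2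
      intro K
      refine ⟨max K t₀ + 1, by simp [lt_of_le_of_lt (le_max_left K t₀)], ?_⟩
      rw [line_pt]
      have := ht (max K t₀ + 1) (by linarith [le_max_right K t₀])
      exact ⟨Set.mem_iUnion.2 ⟨i, this.1⟩, Set.mem_iUnion.2 ⟨j, this.2⟩⟩
    · have hneg : ∀ t : ℚ, a + t • v = a + (-t) • (-v) := by intro t; simp
      obtain ⟨i, j, t₀, ht⟩ := tails_both P Q hP hQ hPline hQline (neg_ne_zero.2 hv)
        (neg_lt_neg hlt : -y₁ < -y₂) (neg_lt_neg hlt)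
        (by rw [← hneg]; exact h1.1) (by rw [← hneg]; exact h2.1)
        (by rw [← hneg]; exact h1.2) (by rw [← hneg]; exact h2.2)
      intro K
      refine ⟨-(max (-K) t₀ + 1), ?_, ?_⟩
      · have : -K ≤ max (-K) t₀ := le_max_left _ _
        linarith
      · rw [line_pt]
        have heq := hneg (-(max (-K) t₀ + 1))
        rw [heq, neg_neg]
        have := ht (max (-K) t₀ + 1) (by linarith [le_max_right (-K) t₀])
        exact ⟨Set.mem_iUnion.2 ⟨i, this.1⟩, Set.mem_iUnion.2 ⟨j, this.2⟩⟩

lemma recDir_smul_nonneg {S : Set (E n)} (hne : S.Nonempty) {v : E n} (hv : RecDir S v)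
    {c : ℚ} (hc : 0 ≤ c) : RecDir S (c • v) := by
  rcases eq_or_lt_of_le hc with h | h
  · rw [← h, zero_smul]
    exact recDir_zero hne.choose_spec
  · exact recDir_smul hv h

lemma recDir_mem_vectorSpan {m : ℕ} {R : Fin m → Set (E n)} {i : Fin m} {v : E n}
    (hv : RecDir (R i) v) : v ∈ vectorSpan ℚ (⋃ i, R i) := by
  obtain ⟨y, hy⟩ := hv
  obtain ⟨t₁, t₂, h12, hm1, hm2⟩ := two_vals hy
  have hd := vsub_mem_vectorSpan ℚ (Set.mem_iUnion.2 ⟨i, hm2⟩) (Set.mem_iUnion.2 ⟨i, hm1⟩)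
  have heq : (y + t₂ • v) -ᵥ (y + t₁ • v) = (t₂ - t₁) • v := by
    rw [vsub_eq_sub, sub_smul]; abel
  rw [heq] at hd
  have h2 := Submodule.smul_mem _ (t₂ - t₁)⁻¹ hd
  rwa [smul_smul, inv_mul_cancel₀ (sub_ne_zero.2 (ne_of_gt h12)), one_smul] at h2

set_option maxHeartbeats 4000000 in
lemma interSpan {k l : ℕ} (P : Fin k → Set (E n)) (Q : Fin l → Set (E n))
    (hP : ∀ i, IsLinearSetQ n (P i)) (hQ : ∀ j, IsLinearSetQ n (Q j))
    (hPline : LineCondition (⋃ i, P i)) (hQline : LineCondition (⋃ j, Q j))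
    (hPne : (⋃ i, P i).Nonempty) (hQne : (⋃ j, Q j).Nonempty)
    (hspan : affineSpan ℚ (⋃ i, P i) = affineSpan ℚ (⋃ j, Q j))
    (hV0 : vectorSpan ℚ (⋃ i, P i) ≠ ⊥) :
    ((⋃ i, P i) ∩ (⋃ j, Q j)).Nonempty ∧
      vectorSpan ℚ (⋃ i, P i) ≤ vectorSpan ℚ ((⋃ i, P i) ∩ (⋃ j, Q j)) := by
  classical
  set UP := ⋃ i, P i with hUP
  set UQ := ⋃ j, Q j with hUQ
  set V : Submodule ℚ (E n) := vectorSpan ℚ UP with hVdef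
  have hVQ : vectorSpan ℚ UQ = V := by
    rw [hVdef, ← direction_affineSpan ℚ UP, ← direction_affineSpan ℚ UQ, hspan]
  obtain ⟨iC, hiCne, hleP⟩ := claimA P hPline hPne
  obtain ⟨jD, hjDne, hleQ'⟩ := claimA Q hQline hQne
  obtain ⟨x₀, hx₀⟩ := hiCne
  obtain ⟨x₁, hx₁⟩ := hjDne
  have hleQ : V ≤ Submodule.span ℚ {v | RecDir (Q jD) v} := by
    rw [← hVQ]; exact hleQ'
  have hdecP : ∀ z : V, ∃ a b₂ : E n, RecDir (P iC) a ∧ RecDir (P iC) b₂ ∧ (z : E n) = a - b₂ :=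
    fun z => span_recDir_diff (hP iC) ⟨x₀, hx₀⟩ (hleP z.2)
  choose gP gM hgP hgM hgE using hdecP
  have hdecQ : ∀ z : V, ∃ a b₂ : E n, RecDir (Q jD) a ∧ RecDir (Q jD) b₂ ∧ (z : E n) = a - b₂ :=
    fun z => span_recDir_diff (hQ jD) ⟨x₁, hx₁⟩ (hleQ z.2)
  choose qP qM hqP hqM hqE using hdecQ
  let bV : Module.Basis (Fin (Module.finrank ℚ V)) ℚ V := Module.finBasis ℚ V
  set d := Module.finrank ℚ V with hd
  let nn : V → ℚ := fun z => ∑ i, |bV.repr z i|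
  have nn_nonneg : ∀ z, 0 ≤ nn z := fun z => Finset.sum_nonneg fun i _ => abs_nonneg _
  have nn_add : ∀ z w, nn (z + w) ≤ nn z + nn w := by
    intro z w
    rw [← Finset.sum_add_distrib]
    refine Finset.sum_le_sum fun i _ => ?_
    rw [map_add]
    exact abs_add_le _ _
  have nn_smul : ∀ (t : ℚ) z, nn (t • z) = |t| * nn z := by
    intro t z
    unfold nn
    rw [Finset.mul_sum]
    refine Finset.sum_congr rfl fun i _ => ?_
    rw [map_smul]
    simp [abs_mul]
  have nn_coord : ∀ z i, |bV.repr z i| ≤ nn z := by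
    intro z i
    show |bV.repr z i| ≤ ∑ j, |bV.repr z j|
    exact Finset.single_le_sum (f := fun j => |bV.repr z j|) (fun j _ => abs_nonneg _)
      (Finset.mem_univ i)
  have nn_sum : ∀ (s : Finset (Fin d)) (f : Fin d → V), nn (∑ i ∈ s, f i) ≤ ∑ i ∈ s, nn (f i) := by
    intro s f
    induction s using Finset.induction_on with
    | empty => simp [nn]
    | @insert a s ha ih =>
        rw [Finset.sum_insert ha, Finset.sum_insert ha]
        exact le_trans (nn_add _ _) (by linarith)
  -- V-valued decomposition vectors
  have hgPV : ∀ z : V, gP z ∈ V := fun z => recDir_mem_vectorSpan (hgP z)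
  have hgMV : ∀ z : V, gM z ∈ V := fun z => recDir_mem_vectorSpan (hgM z)
  have hqPV : ∀ z : V, qP z ∈ V := fun z => hVQ ▸ recDir_mem_vectorSpan (hqP z)
  have hqMV : ∀ z : V, qM z ∈ V := fun z => hVQ ▸ recDir_mem_vectorSpan (hqM z)
  let WgV : Fin d → V := fun i => ⟨gP (bV i) + gM (bV i), Submodule.add_mem _ (hgPV _) (hgMV _)⟩
  let WV : V := ∑ i, WgV i
  let ΦgV : Fin d → V := fun i => ⟨qP (bV i) + qM (bV i), Submodule.add_mem _ (hqPV _) (hqMV _)⟩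
  let ΦQV : V → V := fun z => ∑ i, |bV.repr z i| • ΦgV i
  have coe_repr : ∀ z : V, (z : E n) = ∑ i, bV.repr z i • ((bV i : E n)) := by
    intro z
    conv_lhs => rw [← bV.sum_repr z]
    push_cast
    rfl
  have coe_WV : (WV : E n) = ∑ i, (gP (bV i) + gM (bV i)) := by
    unfold WV WgV
    push_cast
    rfl
  have coe_ΦQV : ∀ z : V, (ΦQV z : E n) = ∑ i, |bV.repr z i| • (qP (bV i) + qM (bV i)) := by
    intro z
    unfold ΦQV ΦgV
    push_cast
    rfl
  -- absorption for P
  have ABS : ∀ (z : V) (N : ℚ), nn z ≤ N → RecDir (P iC) ((z : E n) + N • (WV : E n)) := by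
    intro z N hzN
    have hterm : ∀ i : Fin d, RecDir (P iC)
        ((bV.repr z i + N) • gP (bV i) + (N - bV.repr z i) • gM (bV i)) := by
      intro i
      have h2 := abs_le.1 (le_trans (nn_coord z i) hzN)
      exact recDir_add (hP iC)
        (recDir_smul_nonneg ⟨x₀, hx₀⟩ (hgP _) (by linarith [h2.1, h2.2]))
        (recDir_smul_nonneg ⟨x₀, hx₀⟩ (hgM _) (by linarith [h2.1, h2.2]))
    have hsum := recDir_sum (hP iC) ⟨x₀, hx₀⟩ Finset.univ _ (fun i _ => hterm i)
    have heq : (∑ i, ((bV.repr z i + N) • gP (bV i) + (N - bV.repr z i) • gM (bV i)))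
        = (z : E n) + N • (WV : E n) := by
      rw [coe_repr z, coe_WV, Finset.smul_sum, ← Finset.sum_add_distrib]
      refine Finset.sum_congr rfl fun i _ => ?_
      rw [hgE (bV i)]
      module
    rwa [heq] at hsum
  -- Q side facts
  have hΦrec : ∀ z : V, RecDir (Q jD) ((ΦQV z : E n)) := by
    intro z
    rw [coe_ΦQV]
    exact recDir_sum (hQ jD) ⟨x₁, hx₁⟩ Finset.univ _ (fun i _ =>
      recDir_smul_nonneg ⟨x₁, hx₁⟩
        (recDir_add (hQ jD) (hqP _) (hqM _)) (abs_nonneg _))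
  have hΦrec2 : ∀ z : V, RecDir (Q jD) ((z : E n) + (ΦQV z : E n)) := by
    intro z
    have hterm : ∀ i : Fin d, RecDir (Q jD)
        ((bV.repr z i + |bV.repr z i|) • qP (bV i) + (|bV.repr z i| - bV.repr z i) • qM (bV i)) := by
      intro i
      exact recDir_add (hQ jD)
        (recDir_smul_nonneg ⟨x₁, hx₁⟩ (hqP _) (by have := neg_abs_le (bV.repr z i); linarith))
        (recDir_smul_nonneg ⟨x₁, hx₁⟩ (hqM _) (by
          have := abs_nonneg (bV.repr z i); have := le_abs_self (bV.repr z i); linarith))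
    have hsum := recDir_sum (hQ jD) ⟨x₁, hx₁⟩ Finset.univ _ (fun i _ => hterm i)
    have heq : (∑ i, ((bV.repr z i + |bV.repr z i|) • qP (bV i)
          + (|bV.repr z i| - bV.repr z i) • qM (bV i)))
        = (z : E n) + (ΦQV z : E n) := by
      rw [coe_repr z, coe_ΦQV, ← Finset.sum_add_distrib]
      refine Finset.sum_congr rfl fun i _ => ?_
      rw [hqE (bV i)]
      module
    rwa [heq] at hsum
  set KQ : ℚ := ∑ i, nn (ΦgV i) with hKQ
  have hKQ0 : 0 ≤ KQ := Finset.sum_nonneg fun i _ => nn_nonneg _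
  have hΦnn : ∀ z : V, nn (ΦQV z) ≤ nn z * KQ := by
    intro z
    refine le_trans (nn_sum _ _) ?_
    rw [hKQ, Finset.mul_sum]
    refine Finset.sum_le_sum fun i _ => ?_
    rw [nn_smul]
    rw [abs_abs]
    exact mul_le_mul_of_nonneg_right (nn_coord z i) (nn_nonneg _)
  clear_value KQ ΦQV ΦgV WV WgV nn
  -- x₁ - x₀ ∈ V
  have hcV : x₁ - x₀ ∈ V := by
    have h0 : x₀ ∈ affineSpan ℚ UP := mem_affineSpan ℚ (Set.mem_iUnion.2 ⟨iC, hx₀⟩)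
    have h1 : x₁ ∈ affineSpan ℚ UP := by
      rw [hspan]
      exact mem_affineSpan ℚ (Set.mem_iUnion.2 ⟨jD, hx₁⟩)
    have h2 := AffineSubspace.vsub_mem_direction h1 h0
    rwa [direction_affineSpan] at h2
  set cV : V := ⟨x₁ - x₀, hcV⟩ with hcVdef
  set M := vectorSpan ℚ (UP ∩ UQ) with hM
  -- running one line
  have RUN : ∀ δ : V, δ ≠ 0 →
      (∃ τ : ℚ, RecDir (P iC) ((cV : E n) + (ΦQV δ : E n) + τ • (δ : E n)) ∧
        RecDir (P iC) ((cV : E n) + (ΦQV δ : E n) + (τ + 1) • (δ : E n))) →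
      (δ : E n) ∈ M ∧ (UP ∩ UQ).Nonempty := by
    intro δ hδ0 ⟨τ, hτ1, hτ2⟩
    have hδE : (δ : E n) ≠ 0 := fun h => hδ0 (Subtype.ext h)
    set a := x₁ + (ΦQV δ : E n) with ha
    have haQ : a + (0:ℚ) • (δ : E n) ∈ UQ := by
      have h1 := recDir_mem (hQ jD) hx₁ (hΦrec δ) (zero_le_one)
      refine Set.mem_iUnion.2 ⟨jD, ?_⟩
      rw [ha]
      simpa using h1
    have haQ2 : a + (1:ℚ) • (δ : E n) ∈ UQ := by
      have h1 := recDir_mem (hQ jD) hx₁ (hΦrec2 δ) (zero_le_one)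
      refine Set.mem_iUnion.2 ⟨jD, ?_⟩
      rw [ha]
      have heq : x₁ + (1:ℚ) • ((δ : E n) + (ΦQV δ : E n)) = x₁ + (ΦQV δ : E n) + (1:ℚ) • (δ:E n) := by
        module
      rw [← heq]
      exact h1
    have haP : a + τ • (δ : E n) ∈ UP := by
      have h1 := recDir_mem (hP iC) hx₀ hτ1 (zero_le_one)
      refine Set.mem_iUnion.2 ⟨iC, ?_⟩
      have heq : x₀ + (1:ℚ) • ((cV : E n) + (ΦQV δ : E n) + τ • (δ : E n))
          = a + τ • (δ : E n) := by
        rw [ha, hcVdef]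
        simp only [one_smul]
        abel
      rw [← heq]
      exact h1
    have haP2 : a + (τ + 1) • (δ : E n) ∈ UP := by
      have h1 := recDir_mem (hP iC) hx₀ hτ2 (zero_le_one)
      refine Set.mem_iUnion.2 ⟨iC, ?_⟩
      have heq : x₀ + (1:ℚ) • ((cV : E n) + (ΦQV δ : E n) + (τ + 1) • (δ : E n))
          = a + (τ + 1) • (δ : E n) := by
        rw [ha, hcVdef]
        simp only [one_smul]
        abel
      rw [← heq]
      exact h1
    obtain ⟨i, j, t₀, ht⟩ := tails_both P Q hP hQ hPline hQline hδE
      (lt_add_one τ) (zero_lt_one) haP haP2 haQ haQ2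
    have hz1 := ht t₀ (le_refl _)
    have hz2 := ht (t₀ + 1) (by linarith)
    have hz1m : a + t₀ • (δ : E n) ∈ UP ∩ UQ :=
      ⟨Set.mem_iUnion.2 ⟨i, hz1.1⟩, Set.mem_iUnion.2 ⟨j, hz1.2⟩⟩
    have hz2m : a + (t₀ + 1) • (δ : E n) ∈ UP ∩ UQ :=
      ⟨Set.mem_iUnion.2 ⟨i, hz2.1⟩, Set.mem_iUnion.2 ⟨j, hz2.2⟩⟩
    refine ⟨?_, ⟨_, hz1m⟩⟩
    have hd := vsub_mem_vectorSpan ℚ hz2m hz1m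
    have heq : (a + (t₀ + 1) • (δ : E n)) -ᵥ (a + t₀ • (δ : E n)) = (δ : E n) := by
      rw [vsub_eq_sub]
      module
    rwa [heq] at hd
  -- existence of valid parameters for a given nonzero u
  have EXIST : ∀ u : V, u ≠ 0 → ((u : E n) ∈ M ∧ (UP ∩ UQ).Nonempty) := by
    intro u hu
    set α : ℚ := nn cV + 2 * KQ * nn u with hα
    set β : ℚ := KQ * nn WV with hβ
    set γ : ℚ := 2 * nn u with hγ
    have hα0 : 0 ≤ α := by
      have h1 := nn_nonneg cV
      have h2 := nn_nonneg u
      have h3 : 0 ≤ 2 * KQ * nn u := mul_nonneg (mul_nonneg (by norm_num) hKQ0) h2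
      linarith [hα.ge]
    have hβ0 : 0 ≤ β := by
      have h1 := mul_nonneg hKQ0 (nn_nonneg WV)
      linarith [hβ.ge]
    have hγ0 : 0 ≤ γ := by
      have := nn_nonneg u
      linarith [hγ.ge]
    have pickN : ∃ N : ℚ, (β + γ + 1) ≤ N ∧ N • WV + u ≠ 0 ∧ N • WV + (2:ℚ) • u ≠ 0 := by
      set N₀ : ℚ := β + γ + 1 with hN₀
      by_cases hW0 : WV = 0
      · refine ⟨N₀, le_refl _, ?_, ?_⟩
        · rw [hW0]
          simpa using hu
        · rw [hW0]
          simp only [smul_zero, zero_add]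
          exact smul_ne_zero two_ne_zero hu
      · have inj : ∀ (s N N' : ℚ), N • WV + s • u = 0 → N' • WV + s • u = 0 → N = N' := by
          intro s N N' h1 h2
          by_contra hne
          apply hW0
          have h3 : (N - N') • WV = 0 := by
            calc (N - N') • WV = (N • WV + s • u) - (N' • WV + s • u) := by module
              _ = 0 := by rw [h1, h2, sub_self]
          rcases smul_eq_zero.1 h3 with h4 | h4
          · exact absurd (sub_eq_zero.1 h4) hne
          · exact h4
        have inj1 : ∀ N N' : ℚ, N • WV + u = 0 → N' • WV + u = 0 → N = N' := by
          intro N N' h1 h2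
          exact inj 1 N N' (by rwa [one_smul]) (by rwa [one_smul])
        have inj2 : ∀ N N' : ℚ, N • WV + (2:ℚ) • u = 0 → N' • WV + (2:ℚ) • u = 0 → N = N' :=
          fun N N' h1 h2 => inj 2 N N' h1 h2
        by_cases c1 : (N₀ • WV + u = 0) ∨ (N₀ • WV + (2:ℚ) • u = 0)
        · by_cases c2 : ((N₀+1) • WV + u = 0) ∨ ((N₀+1) • WV + (2:ℚ) • u = 0)
          · refine ⟨N₀ + 2, by linarith, ?_, ?_⟩ <;>
            · intro hc
              rcases c1 with e1 | e1 <;> rcases c2 with e2 | e2 <;>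
                first
                  | exact absurd (inj1 _ _ hc e1) (by intro h; linarith)
                  | exact absurd (inj1 _ _ hc e2) (by intro h; linarith)
                  | exact absurd (inj2 _ _ hc e1) (by intro h; linarith)
                  | exact absurd (inj2 _ _ hc e2) (by intro h; linarith)
                  | exact absurd (inj1 _ _ e1 e2) (by intro h; linarith)
                  | exact absurd (inj2 _ _ e1 e2) (by intro h; linarith)
          · push_neg at c2
            exact ⟨N₀ + 1, by linarith, c2.1, c2.2⟩
        · push_neg at c1
          exact ⟨N₀, le_refl _, c1.1, c1.2⟩
    obtain ⟨N, hN, hδ1, hδ2⟩ := pickN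
    have hN0 : 0 ≤ N := by linarith
    -- the two directions
    have runs : ∀ s : ℚ, 1 ≤ s → s ≤ 2 → (N • WV + s • u ≠ 0) →
        ((N • WV + s • u : V) : E n) ∈ M ∧ (UP ∩ UQ).Nonempty := by
      intro s hs1 hs2 hδne
      set δ : V := N • WV + s • u with hδdef
      set τ : ℚ := α + β * N with hτdef
      have hτ0 : 0 ≤ τ := by
        have h1 : 0 ≤ β * N := mul_nonneg hβ0 hN0
        linarith [hτdef.ge]
      have habs : ∀ τ' : ℚ, τ ≤ τ' →
            RecDir (P iC) ((cV : E n) + (ΦQV δ : E n) + τ' • (δ : E n)) := by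
          intro τ' hττ'
          have hτ'0 : 0 ≤ τ' := le_trans hτ0 hττ'
          set z : V := cV + ΦQV δ + (τ' * s) • u with hzdef
          have hnnδ : nn δ ≤ N * nn WV + s * nn u := by
            rw [hδdef]
            refine le_trans (nn_add _ _) ?_
            rw [nn_smul, nn_smul, abs_of_nonneg hN0, abs_of_nonneg (by linarith : (0:ℚ) ≤ s)]
          have hnnz : nn z ≤ α + β * N + γ * τ' := by
            rw [hzdef]
            refine le_trans (nn_add _ _) ?_
            have h1 := nn_add cV (ΦQV δ)
            have h2 := hΦnn δ
            have h3 : nn ((τ' * s) • u) = |τ' * s| * nn u := nn_smul _ _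
            have h4 : |τ' * s| = τ' * s := abs_of_nonneg (mul_nonneg hτ'0 (by linarith))
            have h5 : nn (ΦQV δ) ≤ (N * nn WV + s * nn u) * KQ :=
              le_trans h2 (mul_le_mul_of_nonneg_right hnnδ hKQ0)
            have h6 : τ' * s * nn u ≤ τ' * 2 * nn u := by
              nlinarith [mul_nonneg (mul_nonneg hτ'0 (nn_nonneg u))
                (show (0:ℚ) ≤ 2 - s by linarith)]
            have h7 : s * nn u * KQ ≤ 2 * nn u * KQ := by
              nlinarith [mul_nonneg (mul_nonneg (nn_nonneg u) hKQ0)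
                (show (0:ℚ) ≤ 2 - s by linarith)]
            have h5' : nn (ΦQV δ) ≤ N * nn WV * KQ + s * nn u * KQ :=
              le_trans h5 (le_of_eq (by ring))
            rw [h3, h4]
            have hβN : β * N = KQ * nn WV * N := by rw [hβ]
            have hγτ : γ * τ' = 2 * nn u * τ' := by rw [hγ]
            have h6' : τ' * s * nn u ≤ 2 * nn u * τ' := le_trans h6 (le_of_eq (by ring))
            have h5'' : nn (ΦQV δ) ≤ KQ * nn WV * N + 2 * nn u * KQ := by
              have := le_trans h5' (by linarith [h7] : N * nn WV * KQ + s * nn u * KQ ≤ N * nn WV * KQ + 2 * nn u * KQ)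
              linarith [this, (by ring : N * nn WV * KQ = KQ * nn WV * N)]
            linarith [h1, h5'', h6', hα.ge, hβN, hγτ]
          have hkey : α + β * N + γ * τ' ≤ τ' * N := by
            nlinarith [mul_nonneg hτ'0 (by linarith : (0:ℚ) ≤ N - γ - β - 1),
              mul_nonneg hτ'0 hβ0]
          have habs2 := ABS z (τ' * N) (le_trans hnnz hkey)
          have heq : (z : E n) + (τ' * N) • (WV : E n)
              = (cV : E n) + (ΦQV δ : E n) + τ' • (δ : E n) := by
            rw [hzdef, hδdef]
            push_cast
            module
          rwa [heq] at habs2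
      exact RUN δ hδne ⟨τ, habs τ (le_refl _), habs (τ + 1) (by linarith)⟩
    have run1 := runs 1 (le_refl _) (by norm_num) (by rwa [one_smul])
    have run2 := runs 2 (by norm_num) (le_refl _) hδ2
    refine ⟨?_, run1.2⟩
    have hsub := Submodule.sub_mem M run2.1 run1.1
    have heq : ((N • WV + (2:ℚ) • u : V) : E n) - ((N • WV + (1:ℚ) • u : V) : E n)
        = (u : E n) := by
      push_cast
      module
    rwa [heq] at hsub
  -- conclude
  have hex : ∃ x ∈ V, x ≠ (0 : E n) := by
    by_contra hno
    push_neg at hno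
    exact hV0 ((Submodule.eq_bot_iff V).2 hno)
  obtain ⟨x, hxV, hx0⟩ := hex
  have hxu : (⟨x, hxV⟩ : V) ≠ 0 := fun h => hx0 (congrArg Subtype.val h)
  refine ⟨(EXIST ⟨x, hxV⟩ hxu).2, ?_⟩
  intro z hz
  rcases eq_or_ne z (0 : E n) with h0 | h0
  · rw [h0]
    exact Submodule.zero_mem _
  · have hzu : (⟨z, hz⟩ : V) ≠ 0 := fun h => h0 (congrArg Subtype.val h)
    exact (EXIST ⟨z, hz⟩ hzu).1


/-- Let P = P₁ ∪ … ∪ P_k and Q = Q₁ ∪ … ∪ Q_l be nonempty, with each P_i, Q_j a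
linear set, and both P and Q satisfying the line condition.  If
aff(P) = aff(Q), then aff(P_i ∩ Q_j) = aff(P) for some i, j. -/
theorem stmt5 {n k l : ℕ} (P : Fin k → Set (Fin n → ℚ)) (Q : Fin l → Set (Fin n → ℚ))
    (hP : ∀ i, IsLinearSetQ n (P i)) (hQ : ∀ j, IsLinearSetQ n (Q j))
    (hPne : (⋃ i, P i).Nonempty) (hQne : (⋃ j, Q j).Nonempty)
    (hPline : LineCondition (⋃ i, P i)) (hQline : LineCondition (⋃ j, Q j))
    (hA : affHull (⋃ i, P i) = affHull (⋃ j, Q j)) :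
    ∃ i j, affHull (P i ∩ Q j) = affHull (⋃ i, P i) := by
  classical
  have hA' : affineSpan ℚ (⋃ i, P i) = affineSpan ℚ (⋃ j, Q j) := by
    rw [affHull_eq_affineSpan, affHull_eq_affineSpan] at hA
    exact SetLike.coe_injective hA
  by_cases hV0 : vectorSpan ℚ (⋃ i, P i) = ⊥
  · -- degenerate case: both are a single point
    have hVQ0 : vectorSpan ℚ (⋃ j, Q j) = ⊥ := by
      rw [← direction_affineSpan ℚ (⋃ j, Q j), ← hA', direction_affineSpan]
      exact hV0
    have hsingleP : ∀ p ∈ (⋃ i, P i), ∀ q ∈ (⋃ i, P i), p = q := by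
      intro p hp q hq
      have h1 := vsub_mem_vectorSpan ℚ hp hq
      rw [hV0, Submodule.mem_bot] at h1
      rw [← sub_eq_zero]
      exact h1
    have hsingleQ : ∀ p ∈ (⋃ j, Q j), ∀ q ∈ (⋃ j, Q j), p = q := by
      intro p hp q hq
      have h1 := vsub_mem_vectorSpan ℚ hp hq
      rw [hVQ0, Submodule.mem_bot] at h1
      rw [← sub_eq_zero]
      exact h1
    obtain ⟨a, ha⟩ := hPne
    obtain ⟨b, hb⟩ := hQne
    have hab : a = b := by
      have h1 : a ∈ affineSpan ℚ (⋃ j, Q j) := by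
        rw [← hA']
        exact mem_affineSpan ℚ ha
      have h2 : b ∈ affineSpan ℚ (⋃ j, Q j) := mem_affineSpan ℚ hb
      have h3 := AffineSubspace.vsub_mem_direction h1 h2
      rw [direction_affineSpan, hVQ0, Submodule.mem_bot] at h3
      rw [← sub_eq_zero]
      exact h3
    obtain ⟨i, hi⟩ := Set.mem_iUnion.1 ha
    obtain ⟨j, hj⟩ := Set.mem_iUnion.1 hb
    refine ⟨i, j, ?_⟩
    have hEq : P i ∩ Q j = (⋃ i, P i) := by
      ext x
      constructor
      · intro hx
        exact Set.mem_iUnion.2 ⟨i, hx.1⟩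
      · intro hx
        have hxa : x = a := hsingleP x hx a ha
        rw [hxa, hab]
        rw [hab] at hi
        exact ⟨(hab ▸ hi : b ∈ P i), hj⟩
    rw [hEq]
  · -- main case
    obtain ⟨hneIQ, hleV⟩ := interSpan P Q hP hQ hPline hQline hPne hQne hA' hV0
    set R : Fin k × Fin l → Set (E n) := fun p => P p.1 ∩ Q p.2 with hR
    have hRunion : (⋃ p, R p) = (⋃ i, P i) ∩ (⋃ j, Q j) := by
      ext x
      simp only [Set.mem_iUnion, Set.mem_inter_iff, hR, Prod.exists]
      constructor
      · rintro ⟨i, j, h1, h2⟩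
        exact ⟨⟨i, h1⟩, ⟨j, h2⟩⟩
      · rintro ⟨⟨i, h1⟩, ⟨j, h2⟩⟩
        exact ⟨i, j, h1, h2⟩
    have hRlin : ∀ p, IsLinearSetQ n (R p) := fun p => isLinearSet_inter (hP p.1) (hQ p.2)
    have hRline : LineCondition (⋃ p, R p) := by
      rw [hRunion]
      exact lineCond_inter P Q hP hQ hPline hQline
    have hRne : (⋃ p, R p).Nonempty := by
      rw [hRunion]
      exact hneIQ
    obtain ⟨⟨i, j⟩, hspanR⟩ := piece_span R hRlin hRline hRne
    have hdir : (affineSpan ℚ (⋃ p, R p)).direction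
        = (affineSpan ℚ (⋃ i, P i)).direction := by
      rw [direction_affineSpan, direction_affineSpan, hRunion]
      exact le_antisymm (vectorSpan_mono ℚ Set.inter_subset_left) hleV
    obtain ⟨z, hz⟩ := hneIQ
    have hmem1 : z ∈ affineSpan ℚ (⋃ p, R p) := mem_affineSpan ℚ (by rw [hRunion]; exact hz)
    have hmem2 : z ∈ affineSpan ℚ (⋃ i, P i) := mem_affineSpan ℚ hz.1
    have heq2 : affineSpan ℚ (⋃ p, R p) = affineSpan ℚ (⋃ i, P i) :=
      AffineSubspace.ext_of_direction_eq hdir ⟨z, hmem1, hmem2⟩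
    refine ⟨i, j, ?_⟩
    rw [affHull_eq_affineSpan, affHull_eq_affineSpan]
    exact congrArg _ ((hspanR.trans heq2 : affineSpan ℚ (R (i, j)) = _))
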